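/- Let Γ be a finite abelian group, θ ≥ 1, g_i ∈ Γ, χ_i ∈ Γ-hat with χ_i(g_j)χ_j(g_i) = 1 for i ≠ j, and let N_i > 1 be the order of χ_i(g_i). The quantum linear space H generated by x_1, ..., x_θ with relations x_i^{N_i} = 0 and x_i x_j = χ_j(g_i) x_j x_i (i ≠ j) has dimension N_1 N_2 ... N_θ, with basis the monomials x_1^{a_1}...x_θ^{a_θ}, 0 ≤ a_i < N_i. -/

import Mathlib

open TensorProduct

/-- The defining relations of a quantum linear space: `xᵢ^{Nᵢ} = 0` and
`xᵢ xⱼ = qᵢⱼ xⱼ xᵢ` for `i ≠ j`. -/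
def qlsRel (k : Type*) [CommRing k] (θ : ℕ) (q : Fin θ → Fin θ → k) (N : Fin θ → ℕ) :
    FreeAlgebra k (Fin θ) → FreeAlgebra k (Fin θ) → Prop := fun a b =>
  (∃ i, a = FreeAlgebra.ι k i ^ N i ∧ b = 0) ∨
  (∃ i j, i ≠ j ∧ a = FreeAlgebra.ι k i * FreeAlgebra.ι k j ∧
    b = q i j • (FreeAlgebra.ι k j * FreeAlgebra.ι k i))

namespace QLSAux

variable {k : Type*} [Field k] {θ : ℕ} (q : Fin θ → Fin θ → k) (N : Fin θ → ℕ)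

/-- The quantum linear space. -/
abbrev H := RingQuot (qlsRel k θ q N)

/-- The generators. -/
def X (i : Fin θ) : H q N := RingQuot.mkAlgHom k (qlsRel k θ q N) (FreeAlgebra.ι k i)

lemma X_pow_eq_zero (i : Fin θ) : X q N i ^ N i = 0 := by
  have h := RingQuot.mkAlgHom_rel k (s := qlsRel k θ q N)
    (Or.inl ⟨i, rfl, rfl⟩ : qlsRel k θ q N (FreeAlgebra.ι k i ^ N i) 0)
  simpa [X, map_pow] using h

lemma X_pow_eq_zero_of_le (i : Fin θ) {n : ℕ} (h : N i ≤ n) : X q N i ^ n = 0 :=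
  pow_eq_zero_of_le h (X_pow_eq_zero q N i)

lemma X_comm {i j : Fin θ} (h : i ≠ j) :
    X q N i * X q N j = q i j • (X q N j * X q N i) := by
  have hrel := RingQuot.mkAlgHom_rel k (s := qlsRel k θ q N)
    (Or.inr ⟨i, j, h, rfl, rfl⟩ : qlsRel k θ q N (FreeAlgebra.ι k i * FreeAlgebra.ι k j)
      (q i j • (FreeAlgebra.ι k j * FreeAlgebra.ι k i)))
  simpa [X, map_mul, map_smul] using hrel

lemma X_pow_comm {i j : Fin θ} (h : i ≠ j) (n : ℕ) :
    X q N i * X q N j ^ n = (q i j ^ n) • (X q N j ^ n * X q N i) := by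
  induction n with
  | zero => simp
  | succ n ih =>
    rw [pow_succ, ← mul_assoc, ih, smul_mul_assoc, mul_assoc, X_comm q N h,
      mul_smul_comm, smul_smul, ← mul_assoc, pow_succ]

/-- Product of generator powers along a list of indices. -/
def prodL (l : List (Fin θ)) (a : Fin θ → ℕ) : H q N :=
  (l.map fun j => X q N j ^ a j).prod

lemma prodL_congr {l : List (Fin θ)} {a b : Fin θ → ℕ} (h : ∀ j ∈ l, a j = b j) :
    prodL q N l a = prodL q N l b := by
  unfold prodL
  congr 1
  exact List.map_congr_left fun j hj => by rw [h j hj]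

/-- The ordered monomial `x₁^{a₁} ⋯ x_θ^{a_θ}`. -/
def m (a : Fin θ → ℕ) : H q N := (List.ofFn fun i => X q N i ^ a i).prod

lemma m_eq_prodL (a : Fin θ → ℕ) : m q N a = prodL q N (List.finRange θ) a := by
  simp [m, prodL, List.ofFn_eq_map]

lemma m_eq_zero {a : Fin θ → ℕ} {i : Fin θ} (h : N i ≤ a i) : m q N a = 0 := by
  exact List.prod_eq_zero (List.mem_ofFn.2 ⟨i, X_pow_eq_zero_of_le q N i h⟩)

lemma X_mul_prodL (i : Fin θ) (l : List (Fin θ)) (hl : l.Pairwise (· < ·)) (hi : i ∈ l)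
    (a : Fin θ → ℕ) :
    ∃ c : k, X q N i * prodL q N l a
      = c • prodL q N l (Function.update a i (a i + 1)) := by
  induction l with
  | nil => simp at hi
  | cons j t ih =>
    have hs : ∀ b ∈ t, j < b := fun b hb => (List.pairwise_cons.1 hl).1 b hb
    have ht : t.Pairwise (· < ·) := (List.pairwise_cons.1 hl).2
    rcases List.mem_cons.1 hi with rfl | hit
    · -- i = j : multiply into the first factor
      refine ⟨1, ?_⟩
      simp only [prodL, List.map_cons, List.prod_cons, one_smul]
      rw [← mul_assoc, ← pow_succ']
      congr 1
      · rw [Function.update_self]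
      · exact congrArg List.prod (List.map_congr_left fun b hb => by
          rw [Function.update_of_ne (ne_of_gt (hs b hb))])
    · have hji : j < i := hs i hit
      obtain ⟨c, hc⟩ := ih ht hit
      refine ⟨q i j ^ a j * c, ?_⟩
      simp only [prodL, List.map_cons, List.prod_cons]
      rw [← mul_assoc, X_pow_comm q N (ne_of_gt hji), smul_mul_assoc, mul_assoc]
      have : X q N i * (List.map (fun j => X q N j ^ a j) t).prod
          = c • (List.map (fun j => X q N j ^ Function.update a i (a i + 1) j) t).prod := hc
      rw [this, mul_smul_comm, smul_smul, Function.update_of_ne (ne_of_lt hji)]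

lemma X_mul_m (i : Fin θ) (a : Fin θ → ℕ) :
    ∃ c : k, X q N i * m q N a = c • m q N (Function.update a i (a i + 1)) := by
  rw [m_eq_prodL, m_eq_prodL]
  exact X_mul_prodL q N i _ (List.pairwise_lt_finRange θ) (List.mem_finRange i) a

section Rep

/-- The index set of the monomial basis. -/
abbrev M := ∀ i : Fin θ, Fin (N i)

/-- The standard basis of the representation space `M N → k`. -/
noncomputable def eB (K : Type*) [Field K] : Module.Basis (M N) K (M N → K) :=
  Pi.basisFun K (M N)

/-- Coefficient for the action of `xᵢ`. -/
def coeff (i : Fin θ) (a : M N) : k := ∏ j ∈ Finset.Iio i, q i j ^ (a j : ℕ)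

/-- The operator representing `xᵢ`. -/
noncomputable def T (i : Fin θ) : Module.End k ((M N → k)) :=
  (eB N k).constr k fun a =>
    if h : (a i : ℕ) + 1 < N i then
      coeff q N i a • eB N k (Function.update a i ⟨(a i : ℕ) + 1, h⟩)
    else 0

lemma T_apply (i : Fin θ) (a : M N) :
    T q N i (eB N k a) = if h : (a i : ℕ) + 1 < N i then
      coeff q N i a • eB N k (Function.update a i ⟨(a i : ℕ) + 1, h⟩)
    else 0 := by
  unfold T
  rw [Module.Basis.constr_basis]

lemma coeff_update_of_lt {i j : Fin θ} (h : j < i) (a : M N) (v : Fin (N j))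
    (hv : (v : ℕ) = (a j : ℕ) + 1) :
    coeff q N i (Function.update a j v) = q i j * coeff q N i a := by
  unfold coeff
  have hmem : j ∈ Finset.Iio i := Finset.mem_Iio.2 h
  rw [← Finset.mul_prod_erase _ _ hmem,
    ← Finset.mul_prod_erase _ (fun j' => q i j' ^ ((a j' : ℕ))) hmem]
  rw [Function.update_self, hv, pow_succ']
  rw [mul_assoc]
  congr 1
  congr 1
  apply Finset.prod_congr rfl
  intro j' hj'
  rw [Function.update_of_ne (Finset.ne_of_mem_erase hj')]

lemma coeff_update_of_not_lt {i j : Fin θ} (h : ¬ j < i) (a : M N) (v : Fin (N j)) :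
    coeff q N i (Function.update a j v) = coeff q N i a := by
  unfold coeff
  apply Finset.prod_congr rfl
  intro j' hj'
  have : j' ≠ j := fun hx => h (hx ▸ Finset.mem_Iio.1 hj')
  rw [Function.update_of_ne this]

lemma T_pow_N (i : Fin θ) : T q N i ^ N i = 0 := by
  have key : ∀ n (a : M N), N i ≤ (a i : ℕ) + n → (T q N i ^ n) (eB N k a) = 0 := by
    intro n
    induction n with
    | zero => intro a ha; exact absurd (a i).isLt (by omega)
    | succ n ih =>
      intro a ha
      rw [pow_succ, Module.End.mul_apply, T_apply]
      split
      · next h =>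
        rw [map_smul, ih _ (by simp [Function.update_self]; omega), smul_zero]
      · rw [map_zero]
  apply (eB N k).ext
  intro a
  rw [key (N i) a (by omega)]
  simp

lemma T_comm (hq : ∀ i j : Fin θ, i ≠ j → q i j * q j i = 1) {i j : Fin θ} (hij : i ≠ j) :
    T q N i * T q N j = q i j • (T q N j * T q N i) := by
  apply (eB N k).ext
  intro a
  rw [Module.End.mul_apply, LinearMap.smul_apply, Module.End.mul_apply,
    T_apply q N j a, T_apply q N i a]
  by_cases hj : (a j : ℕ) + 1 < N j
  · have hui : (Function.update a j ⟨(a j : ℕ) + 1, hj⟩) i = a i :=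
      Function.update_of_ne hij _ _
    by_cases hi : (a i : ℕ) + 1 < N i
    · have huj : (Function.update a i ⟨(a i : ℕ) + 1, hi⟩) j = a j :=
        Function.update_of_ne (Ne.symm hij) _ _
      rw [dif_pos hj, dif_pos hi, map_smul, map_smul, T_apply, T_apply, hui, huj,
        dif_pos hi, dif_pos hj, smul_smul, smul_smul, smul_smul]
      have hbasis : Function.update (Function.update a j ⟨(a j : ℕ) + 1, hj⟩) i
            ⟨(a i : ℕ) + 1, hi⟩
          = Function.update (Function.update a i ⟨(a i : ℕ) + 1, hi⟩) j
            ⟨(a j : ℕ) + 1, hj⟩ :=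
        Function.update_comm (Ne.symm hij) _ _ _
      rw [hbasis]
      congr 1
      rcases lt_or_gt_of_ne hij with hlt | hgt
      · rw [coeff_update_of_not_lt q N (lt_asymm hlt) a,
          coeff_update_of_lt q N hlt a _ rfl,
          show q i j * coeff q N i a * (q j i * coeff q N j a)
            = (q i j * q j i) * (coeff q N i a * coeff q N j a) by ring,
          hq i j hij, one_mul, mul_comm]
      · rw [coeff_update_of_lt q N hgt a _ rfl,
          coeff_update_of_not_lt q N (lt_asymm hgt) a]
        ring
    · rw [dif_pos hj, dif_neg hi, map_smul, map_zero, smul_zero, T_apply, hui,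
        dif_neg hi, smul_zero]
  · rw [dif_neg hj, map_zero]
    by_cases hi : (a i : ℕ) + 1 < N i
    · have huj : (Function.update a i ⟨(a i : ℕ) + 1, hi⟩) j = a j :=
        Function.update_of_ne (Ne.symm hij) _ _
      rw [dif_pos hi, map_smul, T_apply, huj, dif_neg hj, smul_zero, smul_zero]
    · rw [dif_neg hi, map_zero, smul_zero]

/-- The representation of the free algebra. -/
noncomputable def fRep : FreeAlgebra k (Fin θ) →ₐ[k] Module.End k ((M N → k)) :=
  FreeAlgebra.lift k (fun i => T q N i)

lemma fRep_rel (hq : ∀ i j : Fin θ, i ≠ j → q i j * q j i = 1) :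
    ∀ ⦃x y : FreeAlgebra k (Fin θ)⦄, qlsRel k θ q N x y →
    fRep q N x = fRep q N y := by
  intro x y hxy
  rcases hxy with ⟨i, rfl, rfl⟩ | ⟨i, j, hij, rfl, rfl⟩
  · simp only [map_pow, map_zero, fRep, FreeAlgebra.lift_ι_apply]
    exact T_pow_N q N i
  · simp only [map_mul, map_smul, fRep, FreeAlgebra.lift_ι_apply]
    exact T_comm q N hq hij

/-- The representation of the quantum linear space. -/
noncomputable def Φ (hq : ∀ i j : Fin θ, i ≠ j → q i j * q j i = 1) :
    H q N →ₐ[k] Module.End k ((M N → k)) :=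
  RingQuot.liftAlgHom k ⟨fRep q N, fRep_rel q N hq⟩

lemma Φ_X (hq : ∀ i j : Fin θ, i ≠ j → q i j * q j i = 1) (i : Fin θ) :
    Φ q N hq (X q N i) = T q N i := by
  rw [X, Φ, RingQuot.liftAlgHom_mkAlgHom_apply]
  simp only [fRep, FreeAlgebra.lift_ι_apply]

lemma T_pow_apply (i : Fin θ) (n : ℕ) (b : M N) (h : (b i : ℕ) + n < N i)
    (h0 : ∀ j, j < i → (b j : ℕ) = 0) :
    (T q N i ^ n) (eB N k b) = eB N k (Function.update b i ⟨(b i : ℕ) + n, h⟩) := by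
  induction n generalizing b with
  | zero =>
    simp only [pow_zero, Module.End.one_apply]
    congr 1
    funext j
    rcases eq_or_ne j i with rfl | hji
    · rw [Function.update_self]; exact (Fin.ext (by simp)).symm
    · rw [Function.update_of_ne hji]
  | succ n ih =>
    have h1 : (b i : ℕ) + 1 < N i := by omega
    rw [pow_succ, Module.End.mul_apply, T_apply, dif_pos h1]
    have hc : coeff q N i b = 1 := by
      unfold coeff
      apply Finset.prod_eq_one
      intro j hj
      rw [h0 j (Finset.mem_Iio.1 hj), pow_zero]
    rw [hc, one_smul]
    set b' := Function.update b i ⟨(b i : ℕ) + 1, h1⟩ with hb'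
    have hb'i : (b' i : ℕ) = (b i : ℕ) + 1 := by rw [hb', Function.update_self]
    have h' : (b' i : ℕ) + n < N i := by omega
    rw [ih b' h' (fun j hji => by
      rw [hb', Function.update_of_ne (ne_of_lt hji)]; exact h0 j hji)]
    congr 1
    funext j
    rcases eq_or_ne j i with rfl | hji
    · rw [Function.update_self, Function.update_self]
      exact Fin.ext (show ((b' j : ℕ)) + n = ((b j : ℕ)) + (n+1) by omega)
    · rw [Function.update_of_ne hji, Function.update_of_ne hji, hb',
        Function.update_of_ne hji]

/-- The zero multi-index. -/
def e₀ (hN1 : ∀ i, 1 < N i) : M N := fun i => ⟨0, lt_trans one_pos (hN1 i)⟩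

/-- `a` truncated to coordinates `≥ s`. -/
def maskGe (hN1 : ∀ i, 1 < N i) (a : M N) (s : ℕ) : M N :=
  fun j => if s ≤ (j : ℕ) then a j else ⟨0, lt_trans one_pos (hN1 j)⟩

lemma prod_T_apply (hN1 : ∀ i, 1 < N i) (a : M N) :
    ∀ t : ℕ, t ≤ θ →
      ((List.ofFn fun i => T q N i ^ ((a i : ℕ))).drop (θ - t)).prod (eB N k (e₀ N hN1))
        = eB N k (maskGe N hN1 a (θ - t)) := by
  intro t
  induction t with
  | zero =>
    intro _
    have hdrop : (List.ofFn fun i => T q N i ^ ((a i : ℕ))).drop (θ - 0) = [] := by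
      apply List.drop_eq_nil_of_le
      simp
    rw [hdrop]
    simp only [List.prod_nil, Module.End.one_apply]
    congr 1
    funext j
    simp [maskGe, e₀, Nat.not_le.2 j.isLt]
  | succ t ih =>
    intro ht
    have hs : θ - (t + 1) < θ := by omega
    have hlen : θ - (t+1) < (List.ofFn fun i => T q N i ^ ((a i : ℕ))).length := by
      simpa using hs
    rw [List.drop_eq_getElem_cons hlen, List.prod_cons]
    have hgetElem : (List.ofFn fun i => T q N i ^ ((a i : ℕ)))[θ - (t+1)]'hlen
        = T q N ⟨θ - (t+1), hs⟩ ^ ((a ⟨θ - (t+1), hs⟩ : ℕ)) := by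
      simp
    have hsucc : θ - (t+1) + 1 = θ - t := by omega
    rw [hgetElem, Module.End.mul_apply, hsucc, ih (by omega)]
    set i : Fin θ := ⟨θ - (t+1), hs⟩ with hidef
    have hb0 : ∀ j, j < i → ((maskGe N hN1 a (θ - t)) j : ℕ) = 0 := by
      intro j hj
      have hjlt : (j : ℕ) < θ - (t+1) := hj
      have : ¬ (θ - t ≤ (j : ℕ)) := by omega
      simp [maskGe, this, e₀]
    have hbi : ((maskGe N hN1 a (θ - t)) i : ℕ) = 0 := by
      have : ¬ (θ - t ≤ (i : ℕ)) := by simp [hidef]; omega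
      simp [maskGe, this]
    have hbound : ((maskGe N hN1 a (θ - t)) i : ℕ) + (a i : ℕ) < N i := by
      rw [hbi]; simpa using (a i).isLt
    rw [T_pow_apply q N i _ _ hbound hb0]
    congr 1
    funext j
    rcases eq_or_ne j i with rfl | hji
    · rw [Function.update_self]
      have hle : θ - (t+1) ≤ (i : ℕ) := by simp [hidef]
      simp only [maskGe, if_pos hle]
      exact Fin.ext (show ((maskGe N hN1 a (θ - t) i : ℕ)) + ((a i : ℕ)) = ((a i : ℕ)) by omega)
    · rw [Function.update_of_ne hji]
      have hne : (j : ℕ) ≠ θ - (t + 1) := by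
        intro hx; exact hji (Fin.ext hx)
      simp only [maskGe]
      rcases le_or_gt (θ - t) (j : ℕ) with hle | hlt
      · rw [if_pos hle, if_pos (by omega)]
      · rw [if_neg (Nat.not_le.2 hlt), if_neg (by omega)]

/-- The canonical spanning family, indexed by bounded multi-indices. -/
noncomputable def ψ (a : M N) : H q N := m q N (fun i => (a i : ℕ))

lemma Φ_ψ_apply (hq : ∀ i j : Fin θ, i ≠ j → q i j * q j i = 1)
    (hN1 : ∀ i, 1 < N i) (a : M N) :
    Φ q N hq (ψ q N a) (eB N k (e₀ N hN1)) = eB N k a := by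
  have hmap : Φ q N hq (ψ q N a)
      = (List.ofFn fun i => T q N i ^ ((a i : ℕ))).prod := by
    rw [ψ, m, map_list_prod]
    congr 1
    rw [List.map_ofFn]
    congr 1
    funext i
    simp only [Function.comp_apply, map_pow, Φ_X]
  rw [hmap]
  have := prod_T_apply q N hN1 a θ (le_refl θ)
  rw [Nat.sub_self, List.drop_zero] at this
  rw [this]
  congr 1

lemma ψ_linearIndependent (hq : ∀ i j : Fin θ, i ≠ j → q i j * q j i = 1)
    (hN1 : ∀ i, 1 < N i) : LinearIndependent k (ψ q N) := by
  apply LinearIndependent.of_comp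
    ((LinearMap.applyₗ (eB N k (e₀ N hN1))).comp (Φ q N hq).toLinearMap)
  have heq : (⇑((LinearMap.applyₗ (eB N k (e₀ N hN1))).comp (Φ q N hq).toLinearMap) ∘ ψ q N)
      = ⇑(eB N k) := by
    funext a
    exact Φ_ψ_apply q N hq hN1 a
  rw [heq]
  exact (eB N k).linearIndependent

lemma m_mem_span (a : Fin θ → ℕ) :
    m q N a ∈ Submodule.span k (Set.range (ψ q N)) := by
  by_cases h : ∀ i, a i < N i
  · exact Submodule.subset_span ⟨fun i => ⟨a i, h i⟩, rfl⟩
  · push_neg at h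
    obtain ⟨i, hi⟩ := h
    rw [m_eq_zero q N hi]
    exact Submodule.zero_mem _

lemma X_mul_mem_span (i : Fin θ) {x : H q N}
    (hx : x ∈ Submodule.span k (Set.range (ψ q N))) :
    X q N i * x ∈ Submodule.span k (Set.range (ψ q N)) := by
  induction hx using Submodule.span_induction with
  | mem y hy =>
    obtain ⟨a, rfl⟩ := hy
    obtain ⟨c, hc⟩ := X_mul_m q N i (fun j => ((a j : ℕ)))
    rw [ψ, hc]
    exact Submodule.smul_mem _ _ (m_mem_span q N _)
  | zero => rw [mul_zero]; exact Submodule.zero_mem _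
  | add y z _ _ hy hz => rw [mul_add]; exact Submodule.add_mem _ hy hz
  | smul c y _ hy => rw [mul_smul_comm]; exact Submodule.smul_mem _ _ hy

lemma one_mem_span (hN1 : ∀ i, 1 < N i) :
    (1 : H q N) ∈ Submodule.span k (Set.range (ψ q N)) := by
  have h1 : ψ q N (e₀ N hN1) = 1 := by
    rw [ψ, m]
    apply List.prod_eq_one
    intro x hx
    obtain ⟨i, rfl⟩ := List.mem_ofFn.1 hx
    simp [e₀]
  rw [← h1]
  exact Submodule.subset_span ⟨_, rfl⟩

lemma span_eq_top (hN1 : ∀ i, 1 < N i) :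
    Submodule.span k (Set.range (ψ q N)) = ⊤ := by
  set S := Submodule.span k (Set.range (ψ q N)) with hS
  rw [Submodule.eq_top_iff']
  intro y
  obtain ⟨x, rfl⟩ := RingQuot.mkAlgHom_surjective k (qlsRel k θ q N) y
  have key : ∀ x : FreeAlgebra k (Fin θ), ∀ s ∈ S,
      RingQuot.mkAlgHom k (qlsRel k θ q N) x * s ∈ S := by
    intro x
    induction x using FreeAlgebra.induction with
    | grade0 r =>
      intro s hs
      rw [AlgHom.commutes, Algebra.algebraMap_eq_smul_one, smul_mul_assoc, one_mul]
      exact Submodule.smul_mem _ _ hs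
    | grade1 i =>
      intro s hs
      exact X_mul_mem_span q N i hs
    | mul a b ha hb =>
      intro s hs
      rw [map_mul, mul_assoc]
      exact ha _ (hb s hs)
    | add a b ha hb =>
      intro s hs
      rw [map_add, add_mul]
      exact Submodule.add_mem _ (ha s hs) (hb s hs)
  have := key x 1 (one_mem_span q N hN1)
  rwa [mul_one] at this


lemma m_mk (b : Fin θ → ℕ) :
    m q N b = RingQuot.mkAlgHom k (qlsRel k θ q N)
      ((List.ofFn fun i => FreeAlgebra.ι k i ^ b i).prod) := by
  rw [map_list_prod, List.map_ofFn]
  unfold m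
  refine congrArg List.prod (congrArg List.ofFn (funext fun i => ?_))
  simp only [Function.comp_apply, map_pow]
  rfl


end Rep

end QLSAux



theorem quantum_linear_space_dim (k : Type*) [Field k] [IsAlgClosed k] [CharZero k]
    (Γ : Type*) [CommGroup Γ] [Fintype Γ] (θ : ℕ)
    (g : Fin θ → Γ) (χ : Fin θ → (Γ →* kˣ))
    (hcompat : ∀ i j, i ≠ j → ((χ i (g j) : k)) * ((χ j (g i) : k)) = 1)
    (N : Fin θ → ℕ) (hN : ∀ i, N i = orderOf ((χ i (g i) : kˣ))) (hN1 : ∀ i, 1 < N i) :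
    Module.finrank k
        (RingQuot (qlsRel k θ (fun i j => ((χ j (g i) : k))) N)) = ∏ i, N i ∧
    ∃ B : Module.Basis (∀ i, Fin (N i)) k
        (RingQuot (qlsRel k θ (fun i j => ((χ j (g i) : k))) N)),
      ∀ a : ∀ i, Fin (N i),
        B a = RingQuot.mkAlgHom k (qlsRel k θ (fun i j => ((χ j (g i) : k))) N)
          ((List.ofFn fun i => FreeAlgebra.ι k i ^ ((a i : ℕ))).prod) := by
  set q : Fin θ → Fin θ → k := fun i j => ((χ j (g i) : k)) with hqdef
  have hq : ∀ i j : Fin θ, i ≠ j → q i j * q j i = 1 := fun i j hij => by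
    simpa [hqdef, mul_comm] using hcompat j i (Ne.symm hij)
  let B : Module.Basis (QLSAux.M N) k (QLSAux.H q N) :=
    Module.Basis.mk (QLSAux.ψ_linearIndependent q N hq hN1) (QLSAux.span_eq_top q N hN1).ge
  constructor
  · rw [Module.finrank_eq_card_basis B, Fintype.card_pi]
    simp
  · refine ⟨B, fun a => ?_⟩
    show B a = _
    rw [Module.Basis.mk_apply]
    exact QLSAux.m_mk q N _
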